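/- arXiv:math-ph/0505003 — 3 statements merged into one kernel-verified Lean document; each statement's English description precedes it below -/
import Mathlib

section
/- For the flip-model relation with odd n (Φ_n(p) = n+1−p having the fixed point (n+1)/2), the set of triples (p,q,p') with (p,q) ~_n (q,p') and p ≠ p' has cardinality at most n−1; in particular it is o(n^2), so condition (C3) holds. -/
/-- The flip-model equivalence relation on pairs of indices in `{1,...,n}`
(indices modeled by `Fin n`, with the involution `Φ n (p) = n + 1 - p` given by
`Fin.rev`): `(p,q) ~ (q,p) ~ (Φ p, Φ q) ~ (Φ q, Φ p)`. -/
def flipRel (n : ℕ) (P Q : Fin n × Fin n) : Prop :=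
  Q = P ∨ Q = P.swap ∨ Q = (P.1.rev, P.2.rev) ∨ Q = (P.2.rev, P.1.rev)

/-- For odd `n` (where `Φ n` has the fixed point `(n+1)/2`), the set of triples
`(p, q, p')` with `(p,q) ~ₙ (q,p')` and `p ≠ p'` has cardinality at most
`n - 1`; in particular it is `o(n²)`, so condition (C3) holds for the
flip model. -/
theorem flipRel_odd_C3 (n : ℕ) (hn : Odd n) :
    Nat.card {t : Fin n × Fin n × Fin n //
      flipRel n (t.1, t.2.1) (t.2.1, t.2.2) ∧ t.1 ≠ t.2.2} ≤ n - 1 := by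
  obtain ⟨m, hm⟩ := hn
  have hn1 : m < n := by omega
  set mid : Fin n := ⟨m, hn1⟩ with hmid
  -- characterize the set
  have key : ∀ t : Fin n × Fin n × Fin n,
      flipRel n (t.1, t.2.1) (t.2.1, t.2.2) ∧ t.1 ≠ t.2.2 →
      t.2.1 = mid ∧ t.2.2 = t.1.rev ∧ t.1 ≠ mid := by
    rintro ⟨p, q, p'⟩ ⟨h, hne⟩
    change p ≠ p' at hne
    have hmidrev : mid.rev = mid := by
      apply Fin.ext; rw [Fin.val_rev]; simp only [hmid]; omega
    simp only [flipRel, Prod.mk.injEq, Prod.swap] at h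
    rcases h with ⟨h1, h2⟩ | ⟨h1, h2⟩ | ⟨h1, h2⟩ | ⟨h1, h2⟩
    · exact absurd (h2.trans h1).symm hne
    · exact absurd h2.symm hne
    · rw [h1, Fin.rev_rev] at h2; exact absurd h2.symm hne
    · have hq : q = mid := by
        have := congrArg Fin.val h1
        rw [Fin.val_rev] at this
        apply Fin.ext
        simp only [hmid]
        omega
      refine ⟨hq, h2, ?_⟩
      intro hp
      change p = mid at hp
      apply hne
      show p = p'
      rw [h2, hp, hmidrev]
  -- injective map into {x : Fin n // x ≠ mid}
  have hinj : Function.Injective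
      (fun t : {t : Fin n × Fin n × Fin n //
        flipRel n (t.1, t.2.1) (t.2.1, t.2.2) ∧ t.1 ≠ t.2.2} =>
        (⟨t.1.1, (key t.1 t.2).2.2⟩ : {x : Fin n // x ≠ mid})) := by
    rintro ⟨⟨p, q, p'⟩, hp⟩ ⟨⟨r, s, r'⟩, hr⟩ h
    obtain ⟨hq, hp', _⟩ := key _ hp
    obtain ⟨hs, hr', _⟩ := key _ hr
    simp only [Subtype.mk.injEq] at h ⊢
    subst h
    simp_all
  calc Nat.card {t : Fin n × Fin n × Fin n //
      flipRel n (t.1, t.2.1) (t.2.1, t.2.2) ∧ t.1 ≠ t.2.2}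
      ≤ Nat.card {x : Fin n // x ≠ mid} := Nat.card_le_card_of_injective _ hinj
    _ = n - 1 := by
        rw [Nat.card_eq_fintype_card]
        have h := Fintype.card_subtype_compl (fun x : Fin n => x = mid)
        rw [Fintype.card_subtype_eq, Fintype.card_fin] at h
        exact h
end

section
/- Counterexample relation violates (C3): let ~_n be the equivalence relation on {1,...,n}^2 generated by (p,q) ~ (q,p) ~ (Φ_n(p),q) ~ (Φ_n(q),Φ_n(p)), with Φ_n(p) = n+1−p. Then (p,q) ~_n (q,Φ_n(p)) for every p,q, so the number of triples (p,q,p') with (p,q) ~_n (q,p') and p ≠ p' is at least n(n−1). -/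
/-- The generating relation of the counterexample model on pairs of indices in
`{1,...,n}` (indices modeled by `Fin n`, involution `Φ n (p) = n + 1 - p` given
by `Fin.rev`): `(p,q) ~ (q,p)`, `(p,q) ~ (Φ p, q)`, `(p,q) ~ (Φ q, Φ p)`. -/
def badGen (n : ℕ) (P Q : Fin n × Fin n) : Prop :=
  Q = P.swap ∨ Q = (P.1.rev, P.2) ∨ Q = (P.2.rev, P.1.rev)

/-- The equivalence relation generated by `badGen`. -/
def badRel (n : ℕ) : (Fin n × Fin n) → (Fin n × Fin n) → Prop :=
  Relation.EqvGen (badGen n)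

lemma badRel_key (n : ℕ) (p q : Fin n) : badRel n (p, q) (q, p.rev) :=
  Relation.EqvGen.trans _ (p.rev, q) _
    (Relation.EqvGen.rel _ _ (Or.inr (Or.inl rfl)))
    (Relation.EqvGen.rel _ _ (Or.inl rfl))

lemma card_nonfixed (n : ℕ) : n - 1 ≤ Fintype.card {p : Fin n // p ≠ p.rev} := by
  have h1 : Fintype.card {p : Fin n // p = p.rev} ≤ 1 := by
    rw [Fintype.card_le_one_iff]
    rintro ⟨p, hp⟩ ⟨q, hq⟩
    have hp' := congrArg Fin.val hp
    have hq' := congrArg Fin.val hq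
    simp only [Fin.val_rev] at hp' hq'
    have := p.isLt; have := q.isLt
    ext; simp; omega
  have h2 : Fintype.card {p : Fin n // p ≠ p.rev} =
      Fintype.card (Fin n) - Fintype.card {p : Fin n // p = p.rev} :=
    Fintype.card_subtype_compl _
  rw [h2, Fintype.card_fin]
  omega

/-- The counterexample relation violates (C3): `(p,q) ~ₙ (q, Φ p)` for every
`p, q`, and hence the number of triples `(p,q,p')` with `(p,q) ~ₙ (q,p')` and
`p ≠ p'` is at least `n(n-1)`, which is not `o(n²)`. -/
theorem badRel_violates_C3 (n : ℕ) :
    (∀ p q : Fin n, badRel n (p, q) (q, p.rev)) ∧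
    n * (n - 1) ≤ Nat.card {t : Fin n × Fin n × Fin n //
      badRel n (t.1, t.2.1) (t.2.1, t.2.2) ∧ t.1 ≠ t.2.2} := by
  refine ⟨badRel_key n, ?_⟩
  set S := {t : Fin n × Fin n × Fin n //
      badRel n (t.1, t.2.1) (t.2.1, t.2.2) ∧ t.1 ≠ t.2.2}
  have hf : Function.Injective
      (fun x : Fin n × {p : Fin n // p ≠ p.rev} =>
        (⟨(x.2.1, x.1, x.2.1.rev), badRel_key n x.2.1 x.1, x.2.2⟩ : S)) := by
    rintro ⟨q, p, hp⟩ ⟨q', p', hp'⟩ h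
    simp only [Subtype.mk_eq_mk, Prod.mk.injEq] at h
    obtain ⟨h1, h2, -⟩ := h
    simp [h1, h2]
  have := Nat.card_le_card_of_injective _ hf
  calc n * (n - 1) ≤ Nat.card (Fin n × {p : Fin n // p ≠ p.rev}) := by
        rw [Nat.card_prod, Nat.card_eq_fintype_card, Nat.card_eq_fintype_card,
          Fintype.card_fin]
        exact Nat.mul_le_mul_left n (card_nonfixed n)
    _ ≤ Nat.card S := this
end

section
/- Intersection of nearly tangent spherical shells: fix E > 0 and β > 0, and let q ∈ ℝ^d with |q|² /2 = E. The set {p ∈ ℝ^d : ||p|²/2 − E| ≤ β/L and |(p−2q)²/2 − E| ≤ β/L} has Lebesgue measure O(L^{−(d+1)/2}) as L → ∞. -/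
open MeasureTheory

lemma sq_lower_aux {r t A L β : ℝ} (hr : 0 < r) (hL : 0 < L) (hA : A = β / (r * L))
    (h : r - A ≤ t) (hA0 : 0 ≤ A) : r ^ 2 - 2 * (β / L) ≤ t ^ 2 := by
  have hβA : 2 * (β / L) = 2 * r * A := by rw [hA]; field_simp
  rcases le_or_gt r t with hrt | hrt
  · nlinarith
  · rcases le_or_gt (-r) t with hmr | hmr
    · nlinarith
    · nlinarith

set_option maxHeartbeats 1000000 in

private lemma shell_aux_zero (E β : ℝ) (hE : 0 < E) (hβ : 0 < β) :
    ∃ C : ℝ, ∀ L : ℝ, 1 ≤ L → ∀ q : EuclideanSpace ℝ (Fin 0), ‖q‖ ^ 2 / 2 = E →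
      volume {p : EuclideanSpace ℝ (Fin 0) |
          |‖p‖ ^ 2 / 2 - E| ≤ β / L ∧ |‖p - (2 : ℝ) • q‖ ^ 2 / 2 - E| ≤ β / L} ≤
        ENNReal.ofReal (C * L ^ (-(((0 : ℝ) + 1) / 2))) := by
  refine ⟨Real.sqrt (β / E), ?_⟩
  intro L hL q hq
  have hL0 : (0:ℝ) < L := lt_of_lt_of_le one_pos hL
  by_cases hEL : E ≤ β / L
  · calc volume {p : EuclideanSpace ℝ (Fin 0) |
          |‖p‖ ^ 2 / 2 - E| ≤ β / L ∧ |‖p - (2 : ℝ) • q‖ ^ 2 / 2 - E| ≤ β / L}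
        ≤ volume (Set.univ : Set (EuclideanSpace ℝ (Fin 0))) := measure_mono (Set.subset_univ _)
      _ = volume (Set.univ : Set (Fin 0 → ℝ)) := by
          have h := (EuclideanSpace.volume_preserving_symm_measurableEquiv_toLp (Fin 0)).measure_preimage
            (s := Set.univ) MeasurableSet.univ.nullMeasurableSet
          simpa using h
      _ = 1 := by rw [← Set.pi_univ (Set.univ : Set (Fin 0)), volume_pi_pi]; simp
      _ ≤ ENNReal.ofReal (Real.sqrt (β / E) * L ^ (-(((0:ℝ) + 1) / 2))) := by
          rw [ENNReal.one_le_ofReal]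
          have h1 : L ^ (-(((0:ℝ) + 1) / 2)) = (Real.sqrt L)⁻¹ := by
            rw [show (-(((0:ℝ) + 1) / 2)) = -(1/2 : ℝ) by norm_num, Real.rpow_neg hL0.le,
              ← Real.sqrt_eq_rpow]
          rw [h1, ← div_eq_mul_inv, le_div_iff₀ (Real.sqrt_pos.2 hL0), one_mul]
          exact Real.sqrt_le_sqrt (by rw [le_div_iff₀ hE]; nlinarith [(le_div_iff₀ hL0).1 hEL])
  · have : {p : EuclideanSpace ℝ (Fin 0) |
          |‖p‖ ^ 2 / 2 - E| ≤ β / L ∧ |‖p - (2 : ℝ) • q‖ ^ 2 / 2 - E| ≤ β / L} = ∅ := by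
      ext p
      simp only [Set.mem_setOf_eq, Set.mem_empty_iff_false, iff_false, not_and]
      intro h1
      exfalso
      have hp : ‖p‖ = 0 := by simp [Subsingleton.elim p 0]
      rw [hp] at h1
      simp at h1
      rw [abs_of_pos hE] at h1
      exact hEL h1
    rw [this]
    simp

set_option maxHeartbeats 1000000 in
private lemma shell_aux_succ (k : ℕ) (E β : ℝ) (hE : 0 < E) (hβ : 0 < β) :
    ∃ C : ℝ, ∀ L : ℝ, 1 ≤ L → ∀ q : EuclideanSpace ℝ (Fin (k+1)), ‖q‖ ^ 2 / 2 = E →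
      volume {p : EuclideanSpace ℝ (Fin (k+1)) |
          |‖p‖ ^ 2 / 2 - E| ≤ β / L ∧ |‖p - (2 : ℝ) • q‖ ^ 2 / 2 - E| ≤ β / L} ≤
        ENNReal.ofReal (C * L ^ (-((((k:ℝ) + 1) + 1) / 2))) := by
  set r := Real.sqrt (2 * E) with hrdef
  have hr2 : r ^ 2 = 2 * E := Real.sq_sqrt (by positivity)
  have hr0 : 0 < r := Real.sqrt_pos.2 (by positivity)
  refine ⟨(2 * β / r) * (4 * Real.sqrt β) ^ k, ?_⟩
  intro L hL q hq
  have hL0 : (0:ℝ) < L := lt_of_lt_of_le one_pos hL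
  have hqn : ‖q‖ = r := by
    rw [← Real.sqrt_sq (norm_nonneg q), hrdef]; congr 1; linarith
  set u : EuclideanSpace ℝ (Fin (k+1)) := (r⁻¹ : ℝ) • q with hudef
  have hu : ‖u‖ = 1 := by
    rw [hudef, norm_smul, hqn, norm_inv, Real.norm_eq_abs, abs_of_pos hr0, inv_mul_cancel₀ hr0.ne']
  have hvo : Orthonormal ℝ (({(0 : Fin (k+1))} : Set (Fin (k+1))).restrict
      (fun _ : Fin (k+1) => u)) := by
    constructor
    · intro i
      exact hu
    · intro i j hij
      exact absurd (Subtype.ext ((i.2 : i.1 ∈ _).trans (j.2 : j.1 ∈ _).symm)) hij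
  obtain ⟨b, hb⟩ := hvo.exists_orthonormalBasis_extension_of_card_eq (by simp)
  have hb0 : b 0 = u := hb 0 rfl
  set A := β / (r * L) with hAdef
  have hA0 : 0 ≤ A := by positivity
  set w := 2 * Real.sqrt (β / L) with hwdef
  have hw0 : 0 ≤ w := by positivity
  set lo : Fin (k+1) → ℝ := fun i => if i = 0 then r - A else -w with hlodef
  set hi : Fin (k+1) → ℝ := fun i => if i = 0 then r + A else w with hhidef
  set T : Set (EuclideanSpace ℝ (Fin (k+1))) :=
    (MeasurableEquiv.toLp 2 (Fin (k+1) → ℝ)).symm ⁻¹'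
      (Set.univ.pi fun i => Set.Icc (lo i) (hi i)) with hTdef
  have hTmeas : MeasurableSet T :=
    (MeasurableEquiv.toLp 2 (Fin (k+1) → ℝ)).symm.measurable
      (MeasurableSet.univ_pi fun i => measurableSet_Icc)
  have hsub : {p : EuclideanSpace ℝ (Fin (k+1)) |
      |‖p‖ ^ 2 / 2 - E| ≤ β / L ∧ |‖p - (2 : ℝ) • q‖ ^ 2 / 2 - E| ≤ β / L} ⊆ b.repr ⁻¹' T := by
    rintro p ⟨h1, h2⟩
    rw [abs_le] at h1 h2
    have hexp : ‖p - (2:ℝ) • q‖ ^ 2 = ‖p‖ ^ 2 - 4 * (inner ℝ q p : ℝ) + 4 * r ^ 2 := by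
      rw [norm_sub_sq_real, real_inner_smul_right, norm_smul, hqn, real_inner_comm]
      simp [mul_pow]
      ring
    have hinner : |(inner ℝ q p : ℝ) - r ^ 2| ≤ β / L := by
      rw [abs_le]; constructor <;> nlinarith
    have ht : b.repr p 0 = r⁻¹ * (inner ℝ q p : ℝ) := by
      rw [OrthonormalBasis.repr_apply_apply, hb0, hudef, real_inner_smul_left]
    have hta : |b.repr p 0 - r| ≤ A := by
      have : b.repr p 0 - r = r⁻¹ * ((inner ℝ q p : ℝ) - r ^ 2) := by
        rw [ht]; field_simp
      rw [this, abs_mul, abs_of_pos (inv_pos.2 hr0), hAdef]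
      calc r⁻¹ * |(inner ℝ q p : ℝ) - r ^ 2| ≤ r⁻¹ * (β / L) := by
            exact mul_le_mul_of_nonneg_left hinner (by positivity)
        _ = β / (r * L) := by field_simp
    have hnorm : ∀ x : EuclideanSpace ℝ (Fin (k+1)), ‖x‖ ^ 2 = ∑ i, (x i) ^ 2 := by
      intro x
      rw [EuclideanSpace.norm_eq, Real.sq_sqrt (by positivity)]
      simp [sq_abs]
    have hsum : ∑ i, (b.repr p i) ^ 2 = ‖p‖ ^ 2 := by
      rw [← hnorm (b.repr p), b.repr.norm_map]
    have hup : ‖p‖ ^ 2 ≤ 2 * E + 2 * (β / L) := by linarith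
    have ht2 : r ^ 2 - 2 * (β / L) ≤ (b.repr p 0) ^ 2 :=
      sq_lower_aux hr0 hL0 hAdef (by linarith [(abs_le.1 hta).1]) hA0
    have hrest : ∑ i ∈ Finset.univ.erase 0, (b.repr p i) ^ 2 ≤ 4 * (β / L) := by
      have hs' := Finset.add_sum_erase Finset.univ (fun i => (b.repr p i) ^ 2)
        (Finset.mem_univ (0 : Fin (k+1)))
      simp only at hs'
      rw [hsum] at hs'
      linarith [ht2, hup, hr2]
    have hcoord : ∀ i : Fin (k+1), i ≠ 0 → |b.repr p i| ≤ w := by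
      intro i hi0
      have h1' : (b.repr p i) ^ 2 ≤ 4 * (β / L) := by
        refine le_trans ?_ hrest
        exact Finset.single_le_sum (f := fun j => (b.repr p j) ^ 2) (fun j _ => sq_nonneg _)
          (Finset.mem_erase.2 ⟨hi0, Finset.mem_univ i⟩)
      calc |b.repr p i| = Real.sqrt ((b.repr p i) ^ 2) := (Real.sqrt_sq_eq_abs _).symm
        _ ≤ Real.sqrt (4 * (β / L)) := Real.sqrt_le_sqrt h1'
        _ = w := by
            rw [hwdef, show (4 : ℝ) * (β / L) = 2 ^ 2 * (β / L) by norm_num,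
              Real.sqrt_mul (by positivity), Real.sqrt_sq (by norm_num)]
    rw [Set.mem_preimage, hTdef, Set.mem_preimage, Set.mem_univ_pi]
    intro i
    have he : (MeasurableEquiv.toLp 2 (Fin (k+1) → ℝ)).symm (b.repr p) i = b.repr p i := rfl
    rw [he]
    by_cases hi0 : i = 0
    · subst hi0
      simp only [hlodef, hhidef, if_pos rfl, Set.mem_Icc]
      have := abs_le.1 hta
      constructor <;> [linarith [this.1]; linarith [this.2]]
    · simp only [hlodef, hhidef, if_neg hi0, Set.mem_Icc]
      have := abs_le.1 (hcoord i hi0)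
      exact ⟨this.1, this.2⟩
  calc volume {p : EuclideanSpace ℝ (Fin (k+1)) |
          |‖p‖ ^ 2 / 2 - E| ≤ β / L ∧ |‖p - (2 : ℝ) • q‖ ^ 2 / 2 - E| ≤ β / L}
      ≤ volume (b.repr ⁻¹' T) := measure_mono hsub
    _ = volume T := b.measurePreserving_repr.measure_preimage hTmeas.nullMeasurableSet
    _ = volume (Set.univ.pi fun i => Set.Icc (lo i) (hi i)) :=
        (EuclideanSpace.volume_preserving_symm_measurableEquiv_toLp (Fin (k+1))).measure_preimage
          (MeasurableSet.univ_pi fun i => measurableSet_Icc).nullMeasurableSet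
    _ = ∏ i, volume (Set.Icc (lo i) (hi i)) := volume_pi_pi _
    _ = ∏ i, ENNReal.ofReal (hi i - lo i) := by simp [Real.volume_Icc]
    _ = ENNReal.ofReal (2 * A) * ENNReal.ofReal (2 * w) ^ k := by
        have hf0 : ENNReal.ofReal (hi 0 - lo 0) = ENNReal.ofReal (2 * A) := by
          have e1 : hi 0 = r + A := if_pos rfl
          have e2 : lo 0 = r - A := if_pos rfl
          rw [e1, e2]; congr 1; ring
        have hfi : ∀ i ∈ Finset.univ.erase (0 : Fin (k+1)),
            ENNReal.ofReal (hi i - lo i) = ENNReal.ofReal (2 * w) := by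
          intro i hi'
          have hne : i ≠ 0 := (Finset.mem_erase.1 hi').1
          have e1 : hi i = w := if_neg hne
          have e2 : lo i = -w := if_neg hne
          rw [e1, e2]; congr 1; ring
        rw [← Finset.mul_prod_erase Finset.univ _ (Finset.mem_univ (0 : Fin (k+1))), hf0,
          Finset.prod_congr rfl hfi, Finset.prod_const,
          Finset.card_erase_of_mem (Finset.mem_univ _), Finset.card_univ, Fintype.card_fin,
          Nat.add_sub_cancel]
    _ ≤ ENNReal.ofReal ((2 * β / r) * (4 * Real.sqrt β) ^ k * L ^ (-((((k:ℝ) + 1) + 1) / 2))) := by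
        rw [← ENNReal.ofReal_pow (by positivity), ← ENNReal.ofReal_mul (by positivity)]
        refine ENNReal.ofReal_le_ofReal (le_of_eq ?_)
        have hL' : (0:ℝ) < Real.sqrt L := Real.sqrt_pos.2 hL0
        have hpow : L ^ (-((((k:ℝ) + 1) + 1) / 2)) = (L * Real.sqrt L ^ k)⁻¹ := by
          rw [Real.rpow_neg hL0.le]
          congr 1
          rw [show ((((k:ℝ) + 1) + 1) / 2) = 1 + (1/2) * (k:ℝ) by ring, Real.rpow_add hL0,
            Real.rpow_one, Real.rpow_mul hL0.le, Real.rpow_natCast, ← Real.sqrt_eq_rpow]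
        rw [hpow, hAdef, hwdef, Real.sqrt_div hβ.le,
          show 2 * (2 * (Real.sqrt β / Real.sqrt L)) = (4 * Real.sqrt β) / Real.sqrt L by ring,
          div_pow]
        field_simp

/-- Intersection of nearly tangent spherical shells: fix `E > 0` and `β > 0`.
There is a constant `C` (depending only on `d`, `E`, `β`) such that for all
`L ≥ 1` and all `q ∈ ℝ^d` with `|q|²/2 = E`, the set of points `p` with
`||p|²/2 - E| ≤ β/L` and `||p - 2q|²/2 - E| ≤ β/L` has Lebesgue measure at
most `C · L^(-(d+1)/2)`. -/
theorem shell_intersection_measure (d : ℕ) (E β : ℝ) (hE : 0 < E) (hβ : 0 < β) :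
    ∃ C : ℝ, ∀ L : ℝ, 1 ≤ L → ∀ q : EuclideanSpace ℝ (Fin d), ‖q‖ ^ 2 / 2 = E →
      volume {p : EuclideanSpace ℝ (Fin d) |
          |‖p‖ ^ 2 / 2 - E| ≤ β / L ∧ |‖p - (2 : ℝ) • q‖ ^ 2 / 2 - E| ≤ β / L} ≤
        ENNReal.ofReal (C * L ^ (-(((d : ℝ) + 1) / 2))) := by
  obtain _ | k := d
  · simpa only [Nat.cast_zero] using shell_aux_zero E β hE hβ
  · simpa only [Nat.cast_add, Nat.cast_one] using shell_aux_succ k E β hE hβ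
end
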